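/- For any ε ∈ (0,1) and natural number n ≥ 1, (1 − 1/2^{2n})^n > 1/2^n, i.e., the utility attainable by a mask corresponding to a satisfying assignment strictly exceeds the maximum utility of any mask not corresponding to a satisfying assignment. -/

import Mathlib

theorem stmt_2 (ε : ℝ) (hε : ε ∈ Set.Ioo (0:ℝ) 1) (n : ℕ) (hn : 1 ≤ n) :
    (1 - 1 / 2 ^ (2 * n) : ℝ) ^ n > 1 / 2 ^ n := by
  have hp : (0:ℝ) < 2 ^ n := by positivity
  have h4 : (0:ℝ) < 2 ^ (2 * n) := by positivity
  have h2n : (2:ℝ) ^ (2 * n) = 2 ^ n * 2 ^ n := by rw [two_mul, pow_add]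
  have hn2 : (n : ℝ) < 2 ^ n := by exact_mod_cast (Nat.lt_two_pow_self (n := n))
  have h2le : (2:ℝ) ≤ 2 ^ n := by
    calc (2:ℝ) = 2 ^ 1 := (pow_one 2).symm
    _ ≤ 2 ^ n := by exact pow_le_pow_right₀ (by norm_num) hn
  have hdp : (0:ℝ) < 1 / 2 ^ (2 * n) := by positivity
  have hle1 : (1:ℝ) / 2 ^ (2 * n) ≤ 1 := by
    rw [div_le_one h4]; nlinarith
  have hb := one_add_mul_le_pow (a := -(1 / 2 ^ (2 * n) : ℝ)) (by linarith) n
  have hb' : 1 - (n : ℝ) / 2 ^ (2 * n) ≤ (1 - 1 / 2 ^ (2 * n)) ^ n := by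
    have e : (1:ℝ) - 1 / 2 ^ (2 * n) = 1 + -(1 / 2 ^ (2 * n)) := by ring
    rw [e]
    have e2 : (n:ℝ) * -(1 / 2 ^ (2 * n)) = -(n / 2 ^ (2 * n)) := by ring
    rw [e2] at hb; linarith [hb]
  have h1 : (n : ℝ) / 2 ^ (2 * n) < 1 / 2 ^ n := by
    rw [h2n, div_lt_div_iff₀ (by positivity) hp]; nlinarith
  have h2 : (1:ℝ) / 2 ^ n ≤ 1 / 2 := one_div_le_one_div_of_le (by norm_num) h2le
  linarith
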